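/- arXiv:2402.04718 — 8 statements merged into one kernel-verified Lean document; each statement's English description precedes it below -/
import Mathlib

section
/- Let c > 0 and r ∈ (0,1) be real constants. Suppose V : ℝ → ℝ is differentiable, V(t) ≥ 0 for all t ≥ 0, and V'(t) ≤ −c·(V(t))^r for all t ≥ 0. Then there exists a time T with 0 ≤ T ≤ V(0)^{1−r} / (c(1−r)) such that V(T) = 0. -/
/-- Finite-time convergence lemma: if `V ≥ 0` and `V' ≤ −c·V^r` with `c > 0`
and `r ∈ (0,1)`, then `V` reaches zero at some time
`T ≤ V(0)^{1−r}/(c(1−r))`. -/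
theorem finite_time_convergence
    (c r : ℝ) (hc : 0 < c) (hr : r ∈ Set.Ioo (0 : ℝ) 1)
    (V : ℝ → ℝ) (hV : Differentiable ℝ V)
    (hVnonneg : ∀ t, 0 ≤ t → 0 ≤ V t)
    (hV' : ∀ t, 0 ≤ t → deriv V t ≤ -c * (V t) ^ r) :
    ∃ T, 0 ≤ T ∧ T ≤ (V 0) ^ (1 - r) / (c * (1 - r)) ∧ V T = 0 := by
  obtain ⟨hr0, hr1⟩ := hr
  set T := (V 0) ^ (1 - r) / (c * (1 - r)) with hTdef
  have hcr : 0 < c * (1 - r) := mul_pos hc (by linarith)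
  have hT0 : 0 ≤ T := div_nonneg (Real.rpow_nonneg (hVnonneg 0 le_rfl) _) hcr.le
  by_contra hcon
  push_neg at hcon
  have hpos : ∀ t ∈ Set.Icc (0:ℝ) T, 0 < V t := by
    intro t ht
    exact lt_of_le_of_ne (hVnonneg t ht.1) (Ne.symm (hcon t ht.1 ht.2))
  set g : ℝ → ℝ := fun t => V t ^ (1 - r) + c * (1 - r) * t with hg
  have hanti : AntitoneOn g (Set.Icc 0 T) := by
    apply antitoneOn_of_deriv_nonpos (convex_Icc 0 T)
    · apply ContinuousOn.add
      · exact (hV.continuous.continuousOn).rpow_const (fun x _ => Or.inr (by linarith))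
      · exact (continuous_const.mul continuous_id).continuousOn
    · intro x hx
      rw [interior_Icc] at hx
      have hVx : 0 < V x := hpos x ⟨hx.1.le, hx.2.le⟩
      have hd : HasDerivAt g (deriv V x * (1 - r) * V x ^ (1 - r - 1) + c * (1 - r) * 1) x :=
        (((hV x).hasDerivAt.rpow_const (Or.inl hVx.ne')).add
          ((hasDerivAt_id x).const_mul (c * (1 - r))))
      exact hd.differentiableAt.differentiableWithinAt
    · intro x hx
      rw [interior_Icc] at hx
      have hVx : 0 < V x := hpos x ⟨hx.1.le, hx.2.le⟩
      have hd : HasDerivAt g (deriv V x * (1 - r) * V x ^ (1 - r - 1) + c * (1 - r) * 1) x :=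
        (((hV x).hasDerivAt.rpow_const (Or.inl hVx.ne')).add
          ((hasDerivAt_id x).const_mul (c * (1 - r))))
      rw [hd.deriv]
      have hb : deriv V x * (1 - r) * V x ^ (1 - r - 1)
          ≤ (-c * V x ^ r) * ((1 - r) * V x ^ (1 - r - 1)) := by
        rw [mul_assoc]
        exact mul_le_mul_of_nonneg_right (hV' x hx.1.le)
          (mul_nonneg (by linarith) (Real.rpow_nonneg hVx.le _))
      have hone : V x ^ r * V x ^ (1 - r - 1) = 1 := by
        rw [← Real.rpow_add hVx]
        norm_num
      have hsimp : (-c * V x ^ r) * ((1 - r) * V x ^ (1 - r - 1)) = -(c * (1 - r)) := by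
        rw [show (-c * V x ^ r) * ((1 - r) * V x ^ (1 - r - 1))
            = -(c * (1 - r)) * (V x ^ r * V x ^ (1 - r - 1)) by ring, hone, mul_one]
      linarith [hb, hsimp.le, hsimp.ge]
  have hle : g T ≤ g 0 := hanti ⟨le_rfl, hT0⟩ ⟨hT0, le_rfl⟩ hT0
  have hg0 : g 0 = c * (1 - r) * T := by
    simp only [hg]
    rw [hTdef]
    field_simp
    ring
  have hVT : 0 < V T ^ (1 - r) :=
    Real.rpow_pos_of_pos (hpos T ⟨hT0, le_rfl⟩) _
  have : V T ^ (1 - r) + c * (1 - r) * T ≤ c * (1 - r) * T := by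
    simpa [hg] using hle.trans_eq hg0
  linarith
end

section
/- Let n ≥ 1, let b₀ be a real symmetric positive-definite n×n matrix with largest eigenvalue λ_max, and let ε > 0, D̃ > 0 be constants. Let d : ℝ → ℝⁿ satisfy ‖d(t)‖₂ < D̃ for all t, let K : ℝ → ℝ satisfy K(t) > D̃ for all t, define u(t) := −(K(t)/ε)·s(t), and suppose s : ℝ → ℝⁿ is differentiable with s'(t) = λ_max⁻¹·d(t) + b₀⁻¹·u(t). Define V(t) := (1/2)·s(t)ᵀ b₀ s(t). Then at every time t with ‖s(t)‖₂ > ε, the derivative of V satisfies V'(t) < −√(2/λ_max)·(K(t) − D̃)·√(V(t)). -/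
/-- Euclidean norm on `ℝⁿ`. -/
noncomputable def norm2 {n : ℕ} (x : Fin n → ℝ) : ℝ := Real.sqrt (∑ i, x i ^ 2)

open Matrix

private lemma cs_ineq {n : ℕ} {b₀ : Matrix (Fin n) (Fin n) ℝ} (hpd : b₀.PosDef)
    (hsymm : b₀.IsSymm) (x y : Fin n → ℝ) :
    x ⬝ᵥ (b₀ *ᵥ y) ≤ Real.sqrt (x ⬝ᵥ (b₀ *ᵥ x)) * Real.sqrt (y ⬝ᵥ (b₀ *ᵥ y)) := by
  have hnn : ∀ z : Fin n → ℝ, 0 ≤ z ⬝ᵥ (b₀ *ᵥ z) := fun z => by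
    simpa using hpd.posSemidef.dotProduct_mulVec_nonneg z
  have hsf : ∀ a c : Fin n → ℝ, a ⬝ᵥ (b₀ *ᵥ c) = c ⬝ᵥ (b₀ *ᵥ a) := by
    intro a c
    rw [Matrix.dotProduct_mulVec, ← Matrix.mulVec_transpose, hsymm.eq, dotProduct_comm]
  by_cases hy : y = 0
  · simp [hy, Real.sqrt_zero]
  have hq : 0 < y ⬝ᵥ (b₀ *ᵥ y) := by
    have := hpd.dotProduct_mulVec_pos hy
    simpa using this
  set p : ℝ := x ⬝ᵥ (b₀ *ᵥ x) with hp
  set q : ℝ := y ⬝ᵥ (b₀ *ᵥ y) with hqdef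
  set r : ℝ := x ⬝ᵥ (b₀ *ᵥ y) with hr
  have h0 : 0 ≤ (q • x - r • y) ⬝ᵥ (b₀ *ᵥ (q • x - r • y)) := hnn _
  have e : (q • x - r • y) ⬝ᵥ (b₀ *ᵥ (q • x - r • y)) = q * q * p - 2 * q * r * r + r * r * q := by
    rw [Matrix.mulVec_sub, Matrix.mulVec_smul, Matrix.mulVec_smul, sub_dotProduct,
      smul_dotProduct, smul_dotProduct, dotProduct_sub,
      dotProduct_sub, dotProduct_smul, dotProduct_smul,
      dotProduct_smul, dotProduct_smul, hsf y x]
    simp only [smul_eq_mul, ← hp, ← hqdef, ← hr]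
    ring
  rw [e] at h0
  have hr2 : r * r ≤ p * q := by nlinarith [hq, h0]
  have hpnn : 0 ≤ p := hnn x
  calc r ≤ |r| := le_abs_self r
    _ = Real.sqrt (r * r) := (Real.sqrt_mul_self_eq_abs r).symm
    _ ≤ Real.sqrt (p * q) := Real.sqrt_le_sqrt hr2
    _ = Real.sqrt p * Real.sqrt q := Real.sqrt_mul hpnn q

private lemma lmax_pos' {n : ℕ} {b₀ : Matrix (Fin n) (Fin n) ℝ} (hpd : b₀.PosDef)
    {lmax : ℝ}
    (hlmax : IsGreatest {μ : ℝ | Module.End.HasEigenvalue (Matrix.toLin' b₀) μ} lmax) :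
    0 < lmax := by
  obtain ⟨v, hv⟩ := hlmax.1.exists_hasEigenvector
  have hv0 : v ≠ 0 := hv.2
  have h1 : 0 < v ⬝ᵥ (b₀ *ᵥ v) := by
    have := hpd.dotProduct_mulVec_pos hv0
    simpa using this
  have h2 : b₀ *ᵥ v = lmax • v := by
    have := hv.apply_eq_smul
    simpa [Matrix.toLin'_apply] using this
  rw [h2] at h1
  have h3 : 0 < v ⬝ᵥ v :=
    lt_of_le_of_ne (Finset.sum_nonneg fun i _ => mul_self_nonneg _)
      (fun h => hv0 (dotProduct_self_eq_zero.mp h.symm))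
  have h4 : v ⬝ᵥ (lmax • v) = lmax * (v ⬝ᵥ v) := by
    rw [dotProduct_smul, smul_eq_mul]
  rw [h4] at h1
  nlinarith [h1, h3]

private lemma rayleigh_le {n : ℕ} (hn : 1 ≤ n) {b₀ : Matrix (Fin n) (Fin n) ℝ} (hpd : b₀.PosDef)
    {lmax : ℝ}
    (hlmax : IsGreatest {μ : ℝ | Module.End.HasEigenvalue (Matrix.toLin' b₀) μ} lmax)
    (x : Fin n → ℝ) :
    x ⬝ᵥ (b₀ *ᵥ x) ≤ lmax * (∑ i, x i ^ 2) := by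
  haveI : Nonempty (Fin n) := ⟨⟨0, hn⟩⟩
  by_cases hx : x = 0
  · simp [hx]
  set E := EuclideanSpace ℝ (Fin n) with hE
  haveI : Nontrivial E := by
    refine ⟨(WithLp.equiv 2 (Fin n → ℝ)).symm x, 0, fun h => hx ?_⟩
    exact congrArg (WithLp.equiv 2 (Fin n → ℝ)) h
  set T : E →ₗ[ℝ] E := Matrix.toEuclideanLin b₀ with hT
  have hTsym : T.IsSymmetric := Matrix.isHermitian_iff_isSymmetric.mp hpd.isHermitian
  have hEig := hTsym.hasEigenvalue_iSup_of_finiteDimensional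
  set μ : ℝ := ⨆ z : {z : E // z ≠ 0},
      RCLike.re (inner ℝ (T z) (z : E) : ℝ) / ‖(z : E)‖ ^ 2 with hμ
  have hEig' : Module.End.HasEigenvalue (Matrix.toLin' b₀) μ := by
    rw [Module.End.hasEigenvalue_iff_mem_spectrum] at hEig ⊢
    have e1 : spectrum ℝ T = spectrum ℝ b₀ := Matrix.spectrum_toEuclideanLin
    have e2 : spectrum ℝ (Matrix.toLin' b₀) = spectrum ℝ b₀ :=
      AlgEquiv.spectrum_eq (Matrix.toLinAlgEquiv' (R := ℝ)) b₀
    rw [e2, ← e1]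
    simpa using hEig
  have hμle : μ ≤ lmax := hlmax.2 hEig'
  have hbdd : BddAbove (Set.range fun z : {z : E // z ≠ 0} =>
      RCLike.re (inner ℝ (T z) (z : E) : ℝ) / ‖(z : E)‖ ^ 2) := by
    refine ⟨‖LinearMap.toContinuousLinearMap T‖, ?_⟩
    rintro r ⟨z, rfl⟩
    have hz : 0 < ‖(z : E)‖ := norm_pos_iff.mpr z.2
    rw [div_le_iff₀ (by positivity)]
    have h1 : (inner ℝ (T (z : E)) (z : E) : ℝ) ≤ ‖T (z : E)‖ * ‖(z : E)‖ :=
      real_inner_le_norm _ _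
    have h2 : ‖T (z : E)‖ ≤ ‖LinearMap.toContinuousLinearMap T‖ * ‖(z : E)‖ :=
      (LinearMap.toContinuousLinearMap T).le_opNorm (z : E)
    have h3 : RCLike.re (inner ℝ (T (z : E)) (z : E) : ℝ) = (inner ℝ (T (z : E)) (z : E) : ℝ) := rfl
    rw [h3]
    nlinarith [norm_nonneg ((z : E)), norm_nonneg (T (z : E))]
  have hle : ∀ z : E, z ≠ 0 → (inner ℝ (T z) z : ℝ) ≤ lmax * ‖z‖ ^ 2 := by
    intro z hz
    have h1 : RCLike.re (inner ℝ (T z) z : ℝ) / ‖z‖ ^ 2 ≤ μ := le_ciSup hbdd ⟨z, hz⟩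
    have hz2 : (0 : ℝ) < ‖z‖ ^ 2 := by
      have : 0 < ‖z‖ := norm_pos_iff.mpr hz
      positivity
    have h2 := (div_le_iff₀ hz2).mp (h1.trans hμle)
    have h3 : RCLike.re (inner ℝ (T z) z : ℝ) = (inner ℝ (T z) z : ℝ) := rfl
    rw [h3] at h2
    linarith [h2]
  set x' : E := (WithLp.equiv 2 (Fin n → ℝ)).symm x with hx'def
  have hx'0 : x' ≠ 0 := fun h => hx (congrArg (WithLp.equiv 2 (Fin n → ℝ)) h)
  have hmain := hle x' hx'0
  have hinner : (inner ℝ (T x') x' : ℝ) = x ⬝ᵥ (b₀ *ᵥ x) := by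
    rw [dotProduct_comm]
    rw [EuclideanSpace.inner_eq_star_dotProduct, dotProduct_comm]
    rfl
  have hnorm : ‖x'‖ ^ 2 = ∑ i, x i ^ 2 := by
    rw [EuclideanSpace.norm_eq, Real.sq_sqrt (by positivity)]
    simp only [Real.norm_eq_abs, sq_abs]
    exact Finset.sum_congr rfl fun i _ => rfl
  rw [hinner, hnorm] at hmain
  exact hmain

private lemma derivV {n : ℕ} {b₀ : Matrix (Fin n) (Fin n) ℝ} (hb : ∀ i j, b₀ j i = b₀ i j)
    {s : ℝ → Fin n → ℝ} (hs : Differentiable ℝ s) (t : ℝ) :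
    HasDerivAt (fun τ => (1 / 2 : ℝ) * (s τ ⬝ᵥ (b₀ *ᵥ s τ))) (s t ⬝ᵥ (b₀ *ᵥ deriv s t)) t := by
  have hc : ∀ i, HasDerivAt (fun τ => s τ i) (deriv s t i) t := fun i =>
    (ContinuousLinearMap.proj (R := ℝ) (φ := fun _ : Fin n => ℝ) i).hasFDerivAt.comp_hasDerivAt t
      (hs t).hasDerivAt
  have hrw : ∀ τ, (1 / 2 : ℝ) * (s τ ⬝ᵥ (b₀ *ᵥ s τ))
      = ∑ i, ∑ j, (1 / 2 : ℝ) * (s τ i * (b₀ i j * s τ j)) := by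
    intro τ
    simp [dotProduct, Matrix.mulVec, Finset.mul_sum]
  have key : HasDerivAt (fun τ => (1 / 2 : ℝ) * (s τ ⬝ᵥ (b₀ *ᵥ s τ)))
      (∑ i, ∑ j, (1 / 2 : ℝ) *
        (deriv s t i * (b₀ i j * s t j) + s t i * (b₀ i j * deriv s t j))) t := by
    simp only [hrw]
    exact HasDerivAt.fun_sum fun i _ => HasDerivAt.fun_sum fun j _ =>
      (((hc i).mul ((hc j).const_mul (b₀ i j)))).const_mul _
  convert key using 1
  have swap : ∑ i, ∑ j, deriv s t i * (b₀ i j * s t j)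
      = ∑ i, ∑ j, s t i * (b₀ i j * deriv s t j) := by
    rw [Finset.sum_comm]
    refine Finset.sum_congr rfl fun i _ => Finset.sum_congr rfl fun j _ => ?_
    rw [hb i j]
    ring
  have hdp : s t ⬝ᵥ (b₀ *ᵥ deriv s t) = ∑ i, ∑ j, s t i * (b₀ i j * deriv s t j) := by
    simp [dotProduct, Matrix.mulVec, Finset.mul_sum]
  rw [hdp]
  have expand : (∑ i, ∑ j, (1 / 2 : ℝ) *
        (deriv s t i * (b₀ i j * s t j) + s t i * (b₀ i j * deriv s t j)))
      = (1 / 2 : ℝ) * (∑ i, ∑ j, deriv s t i * (b₀ i j * s t j))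
        + (1 / 2 : ℝ) * (∑ i, ∑ j, s t i * (b₀ i j * deriv s t j)) := by
    rw [Finset.mul_sum, Finset.mul_sum, ← Finset.sum_add_distrib]
    refine Finset.sum_congr rfl fun i _ => ?_
    rw [Finset.mul_sum, Finset.mul_sum, ← Finset.sum_add_distrib]
    refine Finset.sum_congr rfl fun j _ => ?_
    ring
  rw [expand, swap]
  ring

/-- Lemma 1 (reaching inequality): with `u = −(K/ε)s`,
`s' = λ_max⁻¹ d + b₀⁻¹ u`, `‖d‖₂ < D̃`, `K > D̃`, and
`V = ½ sᵀ b₀ s`, whenever `‖s‖₂ > ε` we have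
`V' < −√(2/λ_max)·(K − D̃)·√V`. -/
theorem reaching_inequality
    (n : ℕ) (hn : 1 ≤ n)
    (b₀ : Matrix (Fin n) (Fin n) ℝ) (hsymm : b₀.IsSymm) (hpd : b₀.PosDef)
    (lmax : ℝ)
    (hlmax : IsGreatest {μ : ℝ | Module.End.HasEigenvalue (Matrix.toLin' b₀) μ} lmax)
    (ε D : ℝ) (hε : 0 < ε) (hD : 0 < D)
    (d : ℝ → Fin n → ℝ) (hd : ∀ t, norm2 (d t) < D)
    (K : ℝ → ℝ) (hK : ∀ t, D < K t)
    (s : ℝ → Fin n → ℝ) (hs : Differentiable ℝ s)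
    (u : ℝ → Fin n → ℝ) (hu : ∀ t, u t = -(K t / ε) • s t)
    (hs' : ∀ t, deriv s t = lmax⁻¹ • d t + Matrix.mulVec b₀⁻¹ (u t)) :
    ∀ t, ε < norm2 (s t) →
      deriv (fun τ => (1 / 2 : ℝ) * dotProduct (s τ) (Matrix.mulVec b₀ (s τ))) t
        < -(Real.sqrt (2 / lmax)) * (K t - D) *
            Real.sqrt ((1 / 2 : ℝ) * dotProduct (s t) (Matrix.mulVec b₀ (s t))) := by
  intro t ht
  have hb : ∀ i j, b₀ j i = b₀ i j := fun i j => congrFun (congrFun hsymm i) j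
  have hl : 0 < lmax := lmax_pos' hpd hlmax
  have hV := (derivV hb hs t).deriv
  rw [hV]
  -- abbreviations
  set N : ℝ := norm2 (s t) with hN
  have hNpos : 0 < N := lt_trans hε ht
  have hN2 : N ^ 2 = ∑ i, s t i ^ 2 := Real.sq_sqrt (by positivity)
  set A : ℝ := s t ⬝ᵥ (b₀ *ᵥ s t) with hA
  have hst0 : s t ≠ 0 := by
    intro h
    have hz : N = 0 := by rw [hN, norm2, h]; simp
    linarith
  have hApos : 0 < A := by
    have := hpd.dotProduct_mulVec_pos hst0
    simpa using this
  have hAle : A ≤ lmax * N ^ 2 := by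
    rw [hN2]; exact rayleigh_le hn hpd hlmax (s t)
  -- expand the derivative
  have hdet : IsUnit b₀.det := hpd.det_pos.ne'.isUnit
  have hdot_self : s t ⬝ᵥ s t = ∑ i, s t i ^ 2 := by
    simp [dotProduct, pow_two]
  have hexp : s t ⬝ᵥ (b₀ *ᵥ deriv s t)
      = lmax⁻¹ * (s t ⬝ᵥ (b₀ *ᵥ d t)) + (-(K t / ε)) * (N ^ 2) := by
    rw [hs' t, Matrix.mulVec_add, Matrix.mulVec_smul, Matrix.mulVec_mulVec,
        Matrix.mul_nonsing_inv b₀ hdet, Matrix.one_mulVec, dotProduct_add,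
        dotProduct_smul, hu t, dotProduct_smul, hdot_self,
        smul_eq_mul, smul_eq_mul, hN2]
  rw [hexp]
  -- bound the disturbance term
  set Dd : ℝ := norm2 (d t) with hDd
  have hDd0 : 0 ≤ Dd := Real.sqrt_nonneg _
  have hDdD : Dd < D := hd t
  have hd2 : ∑ i, d t i ^ 2 = Dd ^ 2 := (Real.sq_sqrt (by positivity)).symm
  have hX : s t ⬝ᵥ (b₀ *ᵥ d t) ≤ lmax * N * Dd := by
    have h1 := cs_ineq hpd hsymm (s t) (d t)
    have h2 : Real.sqrt A ≤ Real.sqrt lmax * N := by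
      rw [show Real.sqrt lmax * N = Real.sqrt (lmax * N ^ 2) by
        rw [Real.sqrt_mul hl.le, Real.sqrt_sq hNpos.le]]
      exact Real.sqrt_le_sqrt hAle
    have h3 : Real.sqrt (d t ⬝ᵥ (b₀ *ᵥ d t)) ≤ Real.sqrt lmax * Dd := by
      rw [show Real.sqrt lmax * Dd = Real.sqrt (lmax * Dd ^ 2) by
        rw [Real.sqrt_mul hl.le, Real.sqrt_sq hDd0]]
      refine Real.sqrt_le_sqrt ?_
      rw [← hd2]
      exact rayleigh_le hn hpd hlmax (d t)
    have h4 : Real.sqrt A * Real.sqrt (d t ⬝ᵥ (b₀ *ᵥ d t))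
        ≤ (Real.sqrt lmax * N) * (Real.sqrt lmax * Dd) := by
      apply mul_le_mul h2 h3 (Real.sqrt_nonneg _)
      positivity
    have h5 : (Real.sqrt lmax * N) * (Real.sqrt lmax * Dd) = lmax * N * Dd := by
      have hms := Real.mul_self_sqrt hl.le
      calc (Real.sqrt lmax * N) * (Real.sqrt lmax * Dd)
          = (Real.sqrt lmax * Real.sqrt lmax) * (N * Dd) := by ring
        _ = lmax * (N * Dd) := by rw [hms]
        _ = lmax * N * Dd := by ring
    calc s t ⬝ᵥ (b₀ *ᵥ d t) ≤ _ := h1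
      _ ≤ (Real.sqrt lmax * N) * (Real.sqrt lmax * Dd) := h4
      _ = lmax * N * Dd := h5
  have hterm1 : lmax⁻¹ * (s t ⬝ᵥ (b₀ *ᵥ d t)) < N * D := by
    have h6 : lmax⁻¹ * (s t ⬝ᵥ (b₀ *ᵥ d t)) ≤ lmax⁻¹ * (lmax * N * Dd) := by
      apply mul_le_mul_of_nonneg_left hX (by positivity)
    have h7 : lmax⁻¹ * (lmax * N * Dd) = N * Dd := by
      field_simp
    have h8 : N * Dd < N * D := by
      apply mul_lt_mul_of_pos_left hDdD hNpos
    linarith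
  have hterm2 : (-(K t / ε)) * (N ^ 2) ≤ -(K t) * N := by
    have hKpos : 0 < K t := lt_trans hD (hK t)
    have : K t * N ≤ K t / ε * N ^ 2 := by
      rw [div_mul_eq_mul_div, le_div_iff₀ hε]
      have h11 : 0 ≤ (K t * N) * (N - ε) := mul_nonneg (mul_pos hKpos hNpos).le (by linarith)
      nlinarith [h11]
    linarith
  -- final comparison with the RHS
  have hsqrt : Real.sqrt (2 / lmax) * Real.sqrt ((1 / 2 : ℝ) * A) ≤ N := by
    rw [← Real.sqrt_mul (by positivity)]
    have h9 : (2 / lmax) * ((1 / 2 : ℝ) * A) = A / lmax := by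
      field_simp
    rw [h9]
    have h10 : A / lmax ≤ N ^ 2 := by
      rw [div_le_iff₀ hl]
      nlinarith [hAle]
    calc Real.sqrt (A / lmax) ≤ Real.sqrt (N ^ 2) := Real.sqrt_le_sqrt h10
      _ = N := Real.sqrt_sq hNpos.le
  have hKD : 0 < K t - D := sub_pos.mpr (hK t)
  have hrhs : -(K t - D) * N
      ≤ -(Real.sqrt (2 / lmax)) * (K t - D) * Real.sqrt ((1 / 2 : ℝ) * A) := by
    have := mul_le_mul_of_nonneg_left hsqrt hKD.le
    nlinarith [this]
  have hlhs : lmax⁻¹ * (s t ⬝ᵥ (b₀ *ᵥ d t)) + (-(K t / ε)) * (N ^ 2) < -(K t - D) * N := by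
    have : -(K t) * N + N * D = -(K t - D) * N := by ring
    linarith
  calc lmax⁻¹ * (s t ⬝ᵥ (b₀ *ᵥ d t)) + (-(K t / ε)) * (N ^ 2)
      < -(K t - D) * N := hlhs
    _ ≤ _ := hrhs
end

section
/- Let n ≥ 1, let b₀ be a real symmetric positive-definite n×n matrix with largest eigenvalue λ_max, and let ε > 0, D̃ > 0, K_lb > D̃ be constants. Let d : ℝ → ℝⁿ satisfy ‖d(t)‖₂ < D̃ for all t, let K : ℝ → ℝ be continuous with K(t) ≥ K_lb for all t, define u(t) := −(K(t)/ε)·s(t), and suppose s : ℝ → ℝⁿ is differentiable with s'(t) = λ_max⁻¹·d(t) + b₀⁻¹·u(t). Set V(t) := (1/2)·s(t)ᵀ b₀ s(t) and κ₀ := √(2/λ_max)·(K_lb − D̃) > 0. Then: (i) there exists a time T with 0 ≤ T ≤ 2√(V(0))/κ₀ such that ‖s(T)‖₂ ≤ ε; and (ii) for all t₁ ≤ t₂, if ‖s(t₁)‖₂ ≤ ε then ‖s(t₂)‖₂ ≤ ε. -/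
open Matrix Set

/-- Invariance of sublevel sets under a nonpositive-derivative condition. -/
lemma aux_invariance {f : ℝ → ℝ} {c : ℝ} (hf : Differentiable ℝ f)
    (hder : ∀ t, c ≤ f t → deriv f t ≤ 0) {t₁ t₂ : ℝ} (h12 : t₁ ≤ t₂) (h1 : f t₁ ≤ c) :
    f t₂ ≤ c := by
  by_contra h
  push_neg at h
  set A : Set ℝ := Icc t₁ t₂ ∩ f ⁻¹' (Iic c) with hA
  have hclosed : IsClosed A := isClosed_Icc.inter (isClosed_Iic.preimage hf.continuous)
  have hne : A.Nonempty := ⟨t₁, ⟨le_refl _, h12⟩, h1⟩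
  have hbdd : BddAbove A := BddAbove.mono (Set.inter_subset_left) (bddAbove_Icc)
  set τ := sSup A with hτ
  have hτA : τ ∈ A := hclosed.csSup_mem hne hbdd
  obtain ⟨⟨hτ1, hτ2⟩, hτc⟩ := hτA
  have hτc : f τ ≤ c := hτc
  have hτlt : τ < t₂ := lt_of_le_of_ne hτ2 (fun he => absurd (he ▸ hτc) (not_le.2 h))
  have hgt : ∀ x ∈ Ioc τ t₂, c < f x := by
    intro x hx
    by_contra hxc
    push_neg at hxc
    have : x ∈ A := ⟨⟨hτ1.trans hx.1.le, hx.2⟩, hxc⟩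
    exact absurd (le_csSup hbdd this) (not_le.2 hx.1)
  have hanti : AntitoneOn f (Icc τ t₂) := by
    apply antitoneOn_of_deriv_nonpos (convex_Icc τ t₂) hf.continuous.continuousOn
      (hf.differentiableOn)
    intro x hx
    rw [interior_Icc] at hx
    exact hder x (hgt x ⟨hx.1, hx.2.le⟩).le
  have := hanti (left_mem_Icc.2 hτlt.le) (right_mem_Icc.2 hτlt.le) hτlt.le
  exact absurd (this.trans hτc) (not_le.2 h)

/-- Cauchy–Schwarz for a positive semidefinite symmetric form. -/
lemma aux_cs {n : ℕ} {P : Matrix (Fin n) (Fin n) ℝ} (hP : P.PosSemidef)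
    (x y : Fin n → ℝ) :
    (x ⬝ᵥ P *ᵥ y) ^ 2 ≤ (x ⬝ᵥ P *ᵥ x) * (y ⬝ᵥ P *ᵥ y) := by
  have hsym : ∀ a b : Fin n → ℝ, a ⬝ᵥ P *ᵥ b = b ⬝ᵥ P *ᵥ a := by
    intro a b
    have hPt : Pᵀ = P := by
      have := hP.1
      rwa [Matrix.IsHermitian, conjTranspose_eq_transpose_of_trivial] at this
    rw [dotProduct_mulVec, ← mulVec_transpose, hPt, dotProduct_comm]
  have key : ∀ t : ℝ, 0 ≤ (y ⬝ᵥ P *ᵥ y) * (t * t) + (2 * (x ⬝ᵥ P *ᵥ y)) * t + x ⬝ᵥ P *ᵥ x := by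
    intro t
    have h0 := hP.dotProduct_mulVec_nonneg (x + t • y)
    have hst : star (x + t • y) = x + t • y := by simp
    rw [hst] at h0
    rw [mulVec_add, mulVec_smul, dotProduct_add, add_dotProduct, add_dotProduct,
      dotProduct_smul, smul_dotProduct, smul_dotProduct, dotProduct_smul] at h0
    simp only [smul_eq_mul] at h0
    rw [hsym y x] at h0
    ring_nf at h0 ⊢
    linarith
  have := discrim_le_zero key
  rw [discrim] at this
  nlinarith [this]

lemma aux_toLin'_eq {n : ℕ} (A : Matrix (Fin n) (Fin n) ℝ) :
    Matrix.toLin' A = Matrix.toLinAlgEquiv' A := by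
  ext v
  simp [Matrix.toLin'_apply, Matrix.toLinAlgEquiv'_apply]

lemma aux_eig_le {n : ℕ} {b₀ : Matrix (Fin n) (Fin n) ℝ} (hH : b₀.IsHermitian) {lmax : ℝ}
    (hub : ∀ μ : ℝ, Module.End.HasEigenvalue (Matrix.toLin' b₀) μ → μ ≤ lmax) (i : Fin n) :
    hH.eigenvalues i ≤ lmax := by
  apply hub
  rw [Module.End.hasEigenvalue_iff_mem_spectrum, aux_toLin'_eq,
    AlgEquiv.spectrum_eq (Matrix.toLinAlgEquiv' : Matrix (Fin n) (Fin n) ℝ ≃ₐ[ℝ] _)]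
  exact hH.eigenvalues_mem_spectrum_real i

/-- Rayleigh quotient bound from an eigenvalue upper bound, via the spectral theorem. -/
lemma aux_rayleigh {n : ℕ} {b₀ : Matrix (Fin n) (Fin n) ℝ} (hpd : b₀.PosDef) {lmax : ℝ}
    (hub : ∀ μ : ℝ, Module.End.HasEigenvalue (Matrix.toLin' b₀) μ → μ ≤ lmax)
    (x : Fin n → ℝ) : x ⬝ᵥ b₀ *ᵥ x ≤ lmax * (x ⬝ᵥ x) := by
  have hH := hpd.1
  set U : Matrix (Fin n) (Fin n) ℝ := (hH.eigenvectorUnitary : Matrix (Fin n) (Fin n) ℝ) with hU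
  have hpsd : (Matrix.diagonal (fun i => lmax - hH.eigenvalues i)).PosSemidef :=
    Matrix.posSemidef_diagonal_iff.2 (fun i => by linarith [aux_eig_le hH hub i])
  have h2 := hpsd.mul_mul_conjTranspose_same U
  have hUU : U * Uᴴ = 1 := (Matrix.mem_unitaryGroup_iff).mp hH.eigenvectorUnitary.2
  have hkey : U * Matrix.diagonal (fun i => lmax - hH.eigenvalues i) * Uᴴ = lmax • 1 - b₀ := by
    have hsp := hH.spectral_theorem
    have hd : Matrix.diagonal (fun i => lmax - hH.eigenvalues i)
        = lmax • 1 - Matrix.diagonal (RCLike.ofReal ∘ hH.eigenvalues) := by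
      rw [smul_one_eq_diagonal, ← diagonal_sub]
      congr 1
    rw [Unitary.conjStarAlgAut_apply, ← hU, Matrix.star_eq_conjTranspose] at hsp
    rw [hd, Matrix.mul_sub, Matrix.sub_mul, Matrix.mul_smul, mul_one, Matrix.smul_mul, hUU,
      ← hsp]
  rw [hkey] at h2
  have h3 := h2.dotProduct_mulVec_nonneg x
  have hst : star x = x := by simp
  rw [hst, Matrix.sub_mulVec, Matrix.smul_mulVec, Matrix.one_mulVec, dotProduct_sub,
    dotProduct_smul] at h3
  simp only [smul_eq_mul] at h3
  linarith

lemma aux_lmax_pos {n : ℕ} {b₀ : Matrix (Fin n) (Fin n) ℝ} (hpd : b₀.PosDef)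
    {lmax : ℝ} (hev : Module.End.HasEigenvalue (Matrix.toLin' b₀) lmax) : 0 < lmax := by
  obtain ⟨v, hv⟩ := hev.exists_hasEigenvector
  have hv0 : v ≠ 0 := hv.right
  have h1 : b₀ *ᵥ v = lmax • v := by
    have := hv.apply_eq_smul
    rwa [Matrix.toLin'_apply] at this
  have h2 := hpd.dotProduct_mulVec_pos hv0
  have hst : star v = v := by simp
  rw [hst, h1, dotProduct_smul] at h2
  have h3 : 0 < v ⬝ᵥ v := by
    have := (Matrix.PosDef.one (n := Fin n) (R := ℝ)).dotProduct_mulVec_pos hv0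
    rwa [hst, Matrix.one_mulVec] at this
  simp only [smul_eq_mul] at h2
  nlinarith

set_option maxHeartbeats 2000000 in
/-- Lemma 1 (finite-time reaching and invariance): the sliding variable
enters the region `‖s‖₂ ≤ ε` within time `2√(V(0))/κ₀`, where
`κ₀ = √(2/λ_max)(K_lb − D̃)`, and remains there afterwards. -/
theorem reaching_and_invariance
    (n : ℕ) (hn : 1 ≤ n)
    (b₀ : Matrix (Fin n) (Fin n) ℝ) (hsymm : b₀.IsSymm) (hpd : b₀.PosDef)
    (lmax : ℝ)
    (hlmax : IsGreatest {μ : ℝ | Module.End.HasEigenvalue (Matrix.toLin' b₀) μ} lmax)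
    (ε D Klb : ℝ) (hε : 0 < ε) (hD : 0 < D) (hKlb : D < Klb)
    (d : ℝ → Fin n → ℝ) (hd : ∀ t, norm2 (d t) < D)
    (K : ℝ → ℝ) (hKcont : Continuous K) (hK : ∀ t, Klb ≤ K t)
    (s : ℝ → Fin n → ℝ) (hs : Differentiable ℝ s)
    (u : ℝ → Fin n → ℝ) (hu : ∀ t, u t = -(K t / ε) • s t)
    (hs' : ∀ t, deriv s t = lmax⁻¹ • d t + Matrix.mulVec b₀⁻¹ (u t)) :
    (∃ T, 0 ≤ T ∧
        T ≤ 2 * Real.sqrt ((1 / 2 : ℝ) * dotProduct (s 0) (Matrix.mulVec b₀ (s 0))) /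
              (Real.sqrt (2 / lmax) * (Klb - D)) ∧
        norm2 (s T) ≤ ε) ∧
    (∀ t₁ t₂, t₁ ≤ t₂ → norm2 (s t₁) ≤ ε → norm2 (s t₂) ≤ ε) := by
  have hlpos : 0 < lmax := aux_lmax_pos hpd hlmax.1
  have hub : ∀ μ : ℝ, Module.End.HasEigenvalue (Matrix.toLin' b₀) μ → μ ≤ lmax :=
    fun μ h => hlmax.2 h
  have hRay := aux_rayleigh hpd hub
  have hdet : IsUnit b₀.det := isUnit_iff_ne_zero.2 hpd.det_pos.ne'
  have hBinv : ∀ v : Fin n → ℝ, b₀ *ᵥ (b₀⁻¹ *ᵥ v) = v := by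
    intro v
    rw [Matrix.mulVec_mulVec, Matrix.mul_nonsing_inv _ hdet, Matrix.one_mulVec]
  have hnn : ∀ x : Fin n → ℝ, (0:ℝ) ≤ ∑ i, x i ^ 2 :=
    fun x => Finset.sum_nonneg (fun i _ => sq_nonneg _)
  have hnorm_sq : ∀ x : Fin n → ℝ, norm2 x ^ 2 = x ⬝ᵥ x := by
    intro x
    rw [norm2, Real.sq_sqrt (hnn x)]
    simp [dotProduct, sq]
  have hnorm_nonneg : ∀ x : Fin n → ℝ, 0 ≤ norm2 x := fun x => Real.sqrt_nonneg _
  have hpsd_b : ∀ x : Fin n → ℝ, 0 ≤ x ⬝ᵥ b₀ *ᵥ x := by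
    intro x
    have := hpd.posSemidef.dotProduct_mulVec_nonneg x
    simpa using this
  -- Cauchy–Schwarz for the b₀ form in terms of norms
  have hCSb : ∀ x y : Fin n → ℝ, x ⬝ᵥ b₀ *ᵥ y ≤ lmax * (norm2 x * norm2 y) := by
    intro x y
    have h1 := aux_cs hpd.posSemidef x y
    have hx := hRay x
    have hy := hRay y
    have hx0 := hpsd_b x
    have hy0 := hpsd_b y
    have hxx : x ⬝ᵥ x = norm2 x ^ 2 := (hnorm_sq x).symm
    have hyy : y ⬝ᵥ y = norm2 y ^ 2 := (hnorm_sq y).symm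
    have h2 : (x ⬝ᵥ b₀ *ᵥ y) ^ 2 ≤ (lmax * (norm2 x * norm2 y)) ^ 2 := by
      calc (x ⬝ᵥ b₀ *ᵥ y) ^ 2 ≤ (x ⬝ᵥ b₀ *ᵥ x) * (y ⬝ᵥ b₀ *ᵥ y) := h1
        _ ≤ (lmax * (x ⬝ᵥ x)) * (lmax * (y ⬝ᵥ y)) :=
            mul_le_mul hx hy hy0 (le_trans hx0 hx)
        _ = (lmax * (norm2 x * norm2 y)) ^ 2 := by rw [hxx, hyy]; ring
    have hc0 : 0 ≤ lmax * (norm2 x * norm2 y) :=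
      mul_nonneg hlpos.le (mul_nonneg (hnorm_nonneg x) (hnorm_nonneg y))
    nlinarith [h2, hc0]
  -- plain Cauchy–Schwarz
  have hCS1 : ∀ x y : Fin n → ℝ, x ⬝ᵥ y ≤ norm2 x * norm2 y := by
    intro x y
    have h1 := aux_cs (Matrix.PosDef.one (n := Fin n) (R := ℝ)).posSemidef x y
    simp only [Matrix.one_mulVec] at h1
    have hxx : x ⬝ᵥ x = norm2 x ^ 2 := (hnorm_sq x).symm
    have hyy : y ⬝ᵥ y = norm2 y ^ 2 := (hnorm_sq y).symm
    have h2 : (x ⬝ᵥ y) ^ 2 ≤ (norm2 x * norm2 y) ^ 2 := by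
      calc (x ⬝ᵥ y) ^ 2 ≤ (x ⬝ᵥ x) * (y ⬝ᵥ y) := h1
        _ = (norm2 x * norm2 y) ^ 2 := by rw [hxx, hyy]; ring
    have hc0 : 0 ≤ norm2 x * norm2 y := mul_nonneg (hnorm_nonneg x) (hnorm_nonneg y)
    nlinarith [h2, hc0]
  -- lower bound for the inverse form
  have hQuad : ∀ x : Fin n → ℝ, lmax⁻¹ * (x ⬝ᵥ x) ≤ x ⬝ᵥ b₀⁻¹ *ᵥ x := by
    intro x
    set y := b₀⁻¹ *ᵥ x with hy
    have hxy : b₀ *ᵥ y = x := hBinv x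
    have h1 := aux_cs hpd.posSemidef x y
    rw [hxy] at h1
    have hcomm : y ⬝ᵥ x = x ⬝ᵥ y := dotProduct_comm _ _
    rw [hcomm] at h1
    have hQ0 : 0 ≤ x ⬝ᵥ y := by
      have h0 := hpsd_b y
      rw [hxy, hcomm] at h0
      exact h0
    have hx0 : 0 ≤ x ⬝ᵥ x := by rw [← hnorm_sq x]; positivity
    have hray := hRay x
    rw [inv_mul_le_iff₀ hlpos]
    rcases eq_or_lt_of_le hx0 with h0 | h0
    · rw [← h0]
      exact mul_nonneg hlpos.le hQ0
    · nlinarith [h1, mul_le_mul_of_nonneg_right hray hQ0, h0]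
  -- componentwise derivatives
  have hsc : ∀ (t : ℝ) (i : Fin n), HasDerivAt (fun τ => s τ i) (deriv s t i) t :=
    fun t i => hasDerivAt_pi.1 (hs t).hasDerivAt i
  -- the squared norm and its derivative
  set Nf : ℝ → ℝ := fun t => ∑ i, s t i ^ 2 with hNf
  have hNder : ∀ t, HasDerivAt Nf (2 * (s t ⬝ᵥ deriv s t)) t := by
    intro t
    have h := HasDerivAt.fun_sum (fun i (_ : i ∈ Finset.univ) => (hsc t i).pow 2)
    have e : 2 * (s t ⬝ᵥ deriv s t) = ∑ i, ((2:ℕ):ℝ) * s t i ^ (2 - 1) * deriv s t i := by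
      rw [show s t ⬝ᵥ deriv s t = ∑ i, s t i * deriv s t i from rfl, Finset.mul_sum]
      exact Finset.sum_congr rfl fun i _ => by ring
    rw [e]
    exact h
  -- the Lyapunov function and its derivative
  set Vf : ℝ → ℝ := fun t => (1/2 : ℝ) * (s t ⬝ᵥ b₀ *ᵥ s t) with hVf
  have hVder : ∀ t, HasDerivAt Vf (s t ⬝ᵥ b₀ *ᵥ deriv s t) t := by
    intro t
    have hsum := HasDerivAt.fun_sum (fun i (_ : i ∈ Finset.univ) =>
      HasDerivAt.fun_sum (fun j (_ : j ∈ Finset.univ) =>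
        ((hsc t i).mul ((hsc t j).const_mul (b₀ i j)))))
    have h2 := hsum.const_mul (1/2 : ℝ)
    have hfun : Vf = fun τ => (1/2 : ℝ) * ∑ i, ∑ j, s τ i * (b₀ i j * s τ j) := by
      funext τ
      simp [hVf, dotProduct, Matrix.mulVec, Finset.mul_sum]
    have hsymval : ∀ a c : Fin n → ℝ, a ⬝ᵥ b₀ *ᵥ c = c ⬝ᵥ b₀ *ᵥ a := by
      intro a c
      rw [dotProduct_mulVec, ← mulVec_transpose, hsymm, dotProduct_comm]
    have hval : s t ⬝ᵥ b₀ *ᵥ deriv s t =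
        (1/2 : ℝ) * ∑ i, ∑ j,
          (deriv s t i * (b₀ i j * s t j) + s t i * (b₀ i j * deriv s t j)) := by
      have e1 : ∑ i, ∑ j, deriv s t i * (b₀ i j * s t j) = deriv s t ⬝ᵥ b₀ *ᵥ s t := by
        simp [dotProduct, Matrix.mulVec, Finset.mul_sum]
      have e2 : ∑ i, ∑ j, s t i * (b₀ i j * deriv s t j) = s t ⬝ᵥ b₀ *ᵥ deriv s t := by
        simp [dotProduct, Matrix.mulVec, Finset.mul_sum]
      have e3 : deriv s t ⬝ᵥ b₀ *ᵥ s t = s t ⬝ᵥ b₀ *ᵥ deriv s t := hsymval _ _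
      have esplit : ∑ i, ∑ j,
          (deriv s t i * (b₀ i j * s t j) + s t i * (b₀ i j * deriv s t j))
          = (∑ i, ∑ j, deriv s t i * (b₀ i j * s t j))
            + ∑ i, ∑ j, s t i * (b₀ i j * deriv s t j) := by
        rw [← Finset.sum_add_distrib]
        exact Finset.sum_congr rfl fun i _ => by rw [← Finset.sum_add_distrib]
      rw [esplit, e1, e2, e3]
      ring
    rw [hfun, hval]
    exact h2
  -- algebraic form of the derivatives
  have hsd : ∀ t, s t ⬝ᵥ b₀ *ᵥ deriv s t
      = lmax⁻¹ * (s t ⬝ᵥ b₀ *ᵥ d t) - K t / ε * (s t ⬝ᵥ s t) := by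
    intro t
    rw [hs' t, Matrix.mulVec_add, Matrix.mulVec_smul, hBinv, hu t, dotProduct_add,
      dotProduct_smul, dotProduct_smul]
    simp only [smul_eq_mul]
    ring
  have hsd2 : ∀ t, s t ⬝ᵥ deriv s t
      = lmax⁻¹ * (s t ⬝ᵥ d t) - K t / ε * (s t ⬝ᵥ b₀⁻¹ *ᵥ s t) := by
    intro t
    rw [hs' t, hu t, Matrix.mulVec_smul, dotProduct_add, dotProduct_smul, dotProduct_smul]
    simp only [smul_eq_mul]
    ring
  -- norm2 of s as sqrt of Nf
  have hnorm_eq : ∀ t, norm2 (s t) = Real.sqrt (Nf t) := fun t => rfl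
  -- derivative bounds in the region ε ≤ ‖s‖
  set κ : ℝ := Real.sqrt (2 / lmax) * (Klb - D) with hκ
  have hκpos : 0 < κ := mul_pos (Real.sqrt_pos.2 (by positivity)) (sub_pos.2 hKlb)
  have hbound_V : ∀ t, ε ≤ norm2 (s t) →
      s t ⬝ᵥ b₀ *ᵥ deriv s t ≤ -(κ * Real.sqrt (Vf t)) := by
    intro t hts
    set r := norm2 (s t) with hr
    have hr0 : 0 ≤ r := hnorm_nonneg _
    have hrpos : 0 < r := lt_of_lt_of_le hε hts
    -- bound on the disturbance term
    have h1 : s t ⬝ᵥ b₀ *ᵥ d t ≤ lmax * (r * D) := by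
      have := hCSb (s t) (d t)
      have h2 : norm2 (s t) * norm2 (d t) ≤ r * D := by
        have := (hd t).le
        nlinarith [hnorm_nonneg (d t)]
      nlinarith
    have h1' : lmax⁻¹ * (s t ⬝ᵥ b₀ *ᵥ d t) ≤ r * D := by
      have hinv : 0 < lmax⁻¹ := by positivity
      calc lmax⁻¹ * (s t ⬝ᵥ b₀ *ᵥ d t) ≤ lmax⁻¹ * (lmax * (r * D)) := by
            exact mul_le_mul_of_nonneg_left h1 hinv.le
        _ = r * D := by field_simp
    -- bound on the control term
    have h2 : Klb * r ≤ K t / ε * (s t ⬝ᵥ s t) := by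
      have hss : s t ⬝ᵥ s t = r ^ 2 := by rw [← hnorm_sq (s t)]
      rw [hss]
      have hKt : Klb ≤ K t := hK t
      have hKt0 : 0 ≤ K t := le_trans (le_of_lt (hD.trans hKlb)) hKt
      have a1 : Klb * (r * ε) ≤ K t * (r * ε) :=
        mul_le_mul_of_nonneg_right hKt (mul_nonneg hr0 hε.le)
      have a2 : K t * (r * ε) ≤ K t * (r * r) :=
        mul_le_mul_of_nonneg_left (mul_le_mul_of_nonneg_left hts hr0) hKt0
      rw [div_mul_eq_mul_div, le_div_iff₀ hε]
      nlinarith [a1, a2]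
    have h3 : κ * Real.sqrt (Vf t) ≤ (Klb - D) * r := by
      have hV2 : (2 / lmax) * Vf t ≤ r ^ 2 := by
        have : s t ⬝ᵥ b₀ *ᵥ s t ≤ lmax * (s t ⬝ᵥ s t) := hRay (s t)
        have hss : s t ⬝ᵥ s t = r ^ 2 := by rw [← hnorm_sq (s t)]
        have hVfe : Vf t = 1 / 2 * (s t ⬝ᵥ b₀ *ᵥ s t) := rfl
        rw [hVfe, div_mul_eq_mul_div, div_le_iff₀ hlpos]
        nlinarith
      have h4 : Real.sqrt (2 / lmax) * Real.sqrt (Vf t) ≤ r := by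
        rw [← Real.sqrt_mul (by positivity : (0:ℝ) ≤ 2 / lmax)]
        calc Real.sqrt (2 / lmax * Vf t) ≤ Real.sqrt (r ^ 2) := Real.sqrt_le_sqrt hV2
          _ = r := Real.sqrt_sq hr0
      calc κ * Real.sqrt (Vf t) = (Klb - D) * (Real.sqrt (2 / lmax) * Real.sqrt (Vf t)) := by
            rw [hκ]; ring
        _ ≤ (Klb - D) * r := by
            exact mul_le_mul_of_nonneg_left h4 (sub_pos.2 hKlb).le
    rw [hsd t]
    linarith
  have hbound_N : ∀ t, ε ≤ norm2 (s t) → 2 * (s t ⬝ᵥ deriv s t) ≤ 0 := by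
    intro t hts
    set r := norm2 (s t) with hr
    have hr0 : 0 ≤ r := hnorm_nonneg _
    have hrpos : 0 < r := lt_of_lt_of_le hε hts
    have h1 : s t ⬝ᵥ d t ≤ r * D := by
      have := hCS1 (s t) (d t)
      have := (hd t).le
      nlinarith [hnorm_nonneg (d t)]
    have h1' : lmax⁻¹ * (s t ⬝ᵥ d t) ≤ lmax⁻¹ * (r * D) :=
      mul_le_mul_of_nonneg_left h1 (by positivity)
    have hss : s t ⬝ᵥ s t = r ^ 2 := by rw [← hnorm_sq (s t)]
    have hQ : lmax⁻¹ * r ^ 2 ≤ s t ⬝ᵥ b₀⁻¹ *ᵥ s t := by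
      have := hQuad (s t)
      rwa [hss] at this
    have hKε : 0 < K t / ε := div_pos (lt_of_lt_of_le (hD.trans hKlb) (hK t)) hε
    have h2 : K t / ε * (lmax⁻¹ * r ^ 2) ≤ K t / ε * (s t ⬝ᵥ b₀⁻¹ *ᵥ s t) :=
      mul_le_mul_of_nonneg_left hQ hKε.le
    have hinv : 0 < lmax⁻¹ := by positivity
    have h3 : lmax⁻¹ * (r * Klb) ≤ K t / ε * (lmax⁻¹ * r ^ 2) := by
      have hKt : Klb ≤ K t := hK t
      have hKt0 : 0 ≤ K t := le_trans (le_of_lt (hD.trans hKlb)) hKt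
      have a1 : Klb * (r * ε) ≤ K t * (r * ε) :=
        mul_le_mul_of_nonneg_right hKt (mul_nonneg hr0 hε.le)
      have a2 : K t * (r * ε) ≤ K t * (r * r) :=
        mul_le_mul_of_nonneg_left (mul_le_mul_of_nonneg_left hts hr0) hKt0
      have key : Klb * (r * ε) ≤ K t * (r * r) := le_trans a1 a2
      rw [div_mul_eq_mul_div, le_div_iff₀ hε]
      nlinarith [mul_le_mul_of_nonneg_left key hinv.le]
    have h4 : lmax⁻¹ * (r * D) ≤ lmax⁻¹ * (r * Klb) :=
      mul_le_mul_of_nonneg_left (mul_le_mul_of_nonneg_left hKlb.le hr0) hinv.le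
    rw [hsd2 t]
    linarith
  refine ⟨?_, ?_⟩
  · -- reaching
    by_contra hc
    push_neg at hc
    set T0 : ℝ := 2 * Real.sqrt ((1 / 2 : ℝ) * dotProduct (s 0) (Matrix.mulVec b₀ (s 0)))
        / (Real.sqrt (2 / lmax) * (Klb - D)) with hT0
    have hT0κ : T0 = 2 * Real.sqrt (Vf 0) / κ := rfl
    have hc' : ∀ T, 0 ≤ T → T ≤ T0 → ε < norm2 (s T) := hc
    have hT00 : 0 ≤ T0 := by
      rw [hT0κ]
      positivity
    have hVpos : ∀ t ∈ Icc (0:ℝ) T0, 0 < Vf t := by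
      intro t ht
      have hεlt := hc' t ht.1 ht.2
      have hst0 : s t ≠ 0 := by
        intro h0
        rw [hnorm_eq, hNf] at hεlt
        simp only [h0] at hεlt
        simp at hεlt
        linarith
      have := hpd.dotProduct_mulVec_pos hst0
      have hstar : star (s t) = s t := by simp
      rw [hstar] at this
      show 0 < 1 / 2 * (s t ⬝ᵥ b₀ *ᵥ s t)
      linarith
    set g : ℝ → ℝ := fun t => Real.sqrt (Vf t) + κ/2 * t with hg
    have hVdiff : Differentiable ℝ Vf := fun t => (hVder t).differentiableAt
    have hgder : ∀ x ∈ interior (Icc (0:ℝ) T0),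
        HasDerivAt g ((s x ⬝ᵥ b₀ *ᵥ deriv s x) / (2 * Real.sqrt (Vf x)) + κ/2) x := by
      intro x hx
      rw [interior_Icc] at hx
      have hVx : 0 < Vf x := hVpos x ⟨hx.1.le, hx.2.le⟩
      have h1 := (hVder x).sqrt hVx.ne'
      have h2 : HasDerivAt (fun t : ℝ => κ/2 * t) (κ/2) x := by
        simpa using (hasDerivAt_id x).const_mul (κ/2)
      exact h1.add h2
    have hgbound : ∀ x ∈ interior (Icc (0:ℝ) T0), deriv g x ≤ 0 := by
      intro x hx
      rw [(hgder x hx).deriv]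
      rw [interior_Icc] at hx
      have hVx : 0 < Vf x := hVpos x ⟨hx.1.le, hx.2.le⟩
      have hsq : 0 < Real.sqrt (Vf x) := Real.sqrt_pos.2 hVx
      have hb := hbound_V x (hc' x hx.1.le hx.2.le).le
      have : (s x ⬝ᵥ b₀ *ᵥ deriv s x) / (2 * Real.sqrt (Vf x)) ≤ -(κ/2) := by
        rw [div_le_iff₀ (by positivity)]
        calc s x ⬝ᵥ b₀ *ᵥ deriv s x ≤ -(κ * Real.sqrt (Vf x)) := hb
          _ = -(κ/2) * (2 * Real.sqrt (Vf x)) := by ring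
      linarith
    have hcont : ContinuousOn g (Icc (0:ℝ) T0) := by
      apply Continuous.continuousOn
      exact (Real.continuous_sqrt.comp hVdiff.continuous).add
        ((continuous_const).mul continuous_id)
    have hdiffOn : DifferentiableOn ℝ g (interior (Icc (0:ℝ) T0)) :=
      fun x hx => ((hgder x hx).differentiableAt).differentiableWithinAt
    have hanti : AntitoneOn g (Icc (0:ℝ) T0) :=
      antitoneOn_of_deriv_nonpos (convex_Icc _ _) hcont hdiffOn hgbound
    have happ : g T0 ≤ g 0 :=
      hanti (left_mem_Icc.2 hT00) (right_mem_Icc.2 hT00) hT00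
    have hg0 : g 0 = Real.sqrt (Vf 0) := by simp [hg]
    have hgT : g T0 = Real.sqrt (Vf T0) + Real.sqrt (Vf 0) := by
      have hh : κ / 2 * T0 = Real.sqrt (Vf 0) := by
        rw [hT0κ]
        field_simp
      show Real.sqrt (Vf T0) + κ / 2 * T0 = Real.sqrt (Vf T0) + Real.sqrt (Vf 0)
      rw [hh]
    have hVT0 : 0 < Real.sqrt (Vf T0) := Real.sqrt_pos.2 (hVpos T0 ⟨hT00, le_refl _⟩)
    rw [hg0, hgT] at happ
    linarith
  · -- invariance
    intro t₁ t₂ h12 h1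
    have hNdiff : Differentiable ℝ Nf := fun t => (hNder t).differentiableAt
    have hder : ∀ t, ε ^ 2 ≤ Nf t → deriv Nf t ≤ 0 := by
      intro t ht
      rw [(hNder t).deriv]
      apply hbound_N
      rw [hnorm_eq]
      calc ε = Real.sqrt (ε ^ 2) := (Real.sqrt_sq hε.le).symm
        _ ≤ Real.sqrt (Nf t) := Real.sqrt_le_sqrt ht
    have h1' : Nf t₁ ≤ ε ^ 2 := by
      have : norm2 (s t₁) ^ 2 ≤ ε ^ 2 := pow_le_pow_left₀ (hnorm_nonneg _) h1 2
      rwa [hnorm_eq, Real.sq_sqrt (hnn (s t₁))] at this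
    have h2' : Nf t₂ ≤ ε ^ 2 := aux_invariance hNdiff hder h12 h1'
    rw [hnorm_eq]
    calc Real.sqrt (Nf t₂) ≤ Real.sqrt (ε ^ 2) := Real.sqrt_le_sqrt h2'
      _ = ε := Real.sqrt_sq hε.le
end

section
/- Let ε, α, β > 0 and ρ ∈ (1,2) be real constants, and let R > 0 be the unique zero of F(x) := ε − α·sig^ρ(x) − β·x. Then for all real numbers q and ω, if |ω + α·sig^ρ(q) + β·q| ≤ ε and |q| > R, then q·ω < 0. -/
/-- `sig^ρ(x) = |x|^ρ · sgn(x)`. -/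
noncomputable def sig (ρ x : ℝ) : ℝ := |x| ^ ρ * Real.sign x

/-- Outside the bound `R`, the Lyapunov derivative term is negative: if
`|ω + α·sig^ρ(q) + β·q| ≤ ε` and `|q| > R` then `q·ω < 0`. -/
theorem attraction_outside_bound
    (ε α β ρ : ℝ) (hε : 0 < ε) (hα : 0 < α) (hβ : 0 < β)
    (hρ : ρ ∈ Set.Ioo (1 : ℝ) 2)
    (R : ℝ) (hR : 0 < R)
    (hFR : ε - α * sig ρ R - β * R = 0)
    (hFuniq : ∀ x : ℝ, ε - α * sig ρ x - β * x = 0 → x = R) :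
    ∀ q ω : ℝ, |ω + α * sig ρ q + β * q| ≤ ε → R < |q| → q * ω < 0 := by
  intro q ω habs hq
  have hρ0 : 0 < ρ := lt_trans one_pos hρ.1
  have hsR : sig ρ R = R ^ ρ := by
    simp [sig, Real.sign_of_pos hR, abs_of_pos hR]
  have heps : ε = α * R ^ ρ + β * R := by
    rw [hsR] at hFR; linarith
  have h1 := (abs_le.1 habs).1
  have h2 := (abs_le.1 habs).2
  rcases lt_or_ge 0 q with hq0 | hq0
  · -- q > 0, so R < q
    have hRq : R < q := by rwa [abs_of_pos hq0] at hq
    have hsq : sig ρ q = q ^ ρ := by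
      simp [sig, Real.sign_of_pos hq0, abs_of_pos hq0]
    have hpow : R ^ ρ < q ^ ρ := Real.rpow_lt_rpow hR.le hRq hρ0
    have hω : ω < 0 := by
      rw [hsq] at h2
      nlinarith
    exact mul_neg_of_pos_of_neg hq0 hω
  · have hq0' : q < 0 := by
      rcases lt_or_eq_of_le hq0 with h | h
      · exact h
      · exfalso; rw [h] at hq; simp at hq; linarith
    have hRq : R < -q := by rwa [abs_of_neg hq0'] at hq
    have hsq : sig ρ q = -(-q) ^ ρ := by
      simp [sig, Real.sign_of_neg hq0', abs_of_neg hq0']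
    have hpow : R ^ ρ < (-q) ^ ρ := Real.rpow_lt_rpow hR.le hRq hρ0
    have hω : 0 < ω := by
      rw [hsq] at h1
      nlinarith
    exact mul_neg_of_neg_of_pos hq0' hω
end

section
/- Let ε, α, β > 0 and ρ ∈ (1,2) be real constants, let R > 0 be the unique zero of F(x) := ε − α·sig^ρ(x) − β·x, and let t₀ ∈ ℝ. Suppose r : ℝ → ℝ is differentiable and satisfies the sliding-variable bound |r'(t) + α·sig^ρ(r(t)) + β·r(t)| ≤ ε for all t ≥ t₀, and |r(t₀)| ≤ R. Then |r(t)| ≤ R for all t ≥ t₀. -/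
/-- Barrier lemma: a differentiable function that starts nonpositive and whose
derivative is nonpositive whenever the function is nonnegative stays nonpositive. -/
lemma nonpos_of_deriv_nonpos_on_nonneg (t₀ : ℝ) (u : ℝ → ℝ) (hu : Differentiable ℝ u)
    (h0 : u t₀ ≤ 0) (hd : ∀ t, t₀ ≤ t → 0 ≤ u t → deriv u t ≤ 0) :
    ∀ t, t₀ ≤ t → u t ≤ 0 := by
  intro t₁ ht₁
  by_contra hpos
  push_neg at hpos
  set S : Set ℝ := Set.Icc t₀ t₁ ∩ {t | u t ≤ 0} with hS
  have hSne : S.Nonempty := ⟨t₀, ⟨le_refl _, ht₁⟩, h0⟩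
  have hSbdd : BddAbove S := ⟨t₁, fun x hx => hx.1.2⟩
  have hSclosed : IsClosed S :=
    isClosed_Icc.inter (isClosed_le hu.continuous continuous_const)
  have hsmem : sSup S ∈ S := hSclosed.csSup_mem hSne hSbdd
  set s := sSup S with hs
  obtain ⟨⟨hts, hst1⟩, hus⟩ := hsmem
  have hus2 : u s ≤ 0 := hus
  have hslt : s < t₁ := by
    rcases lt_or_eq_of_le hst1 with h | h
    · exact h
    · exfalso; rw [h] at hus2; linarith
  have hanti : AntitoneOn u (Set.Icc s t₁) := by
    apply antitoneOn_of_deriv_nonpos (convex_Icc s t₁) hu.continuous.continuousOn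
    · exact fun x _ => (hu x).differentiableWithinAt
    · intro x hx
      rw [interior_Icc] at hx
      refine hd x (le_trans hts hx.1.le) ?_
      by_contra hneg
      push_neg at hneg
      have : x ∈ S := ⟨⟨le_trans hts hx.1.le, hx.2.le⟩, hneg.le⟩
      have := le_csSup hSbdd this
      linarith [hx.1]
  have := hanti (Set.mem_Icc.2 ⟨le_rfl, hslt.le⟩) (Set.mem_Icc.2 ⟨hslt.le, le_rfl⟩) hslt.le
  linarith

/-- Lemma 4 (invariance of the error bound): if the sliding-variable bound
`|r' + α·sig^ρ(r) + β·r| ≤ ε` holds for `t ≥ t₀` and `|r(t₀)| ≤ R`, where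
`R > 0` is the unique zero of `F(x) = ε − α·sig^ρ(x) − β·x`, then
`|r(t)| ≤ R` for all `t ≥ t₀`. -/
theorem error_bound_invariance
    (ε α β ρ : ℝ) (hε : 0 < ε) (hα : 0 < α) (hβ : 0 < β)
    (hρ : ρ ∈ Set.Ioo (1 : ℝ) 2)
    (R : ℝ) (hR : 0 < R)
    (hFR : ε - α * sig ρ R - β * R = 0)
    (hFuniq : ∀ x : ℝ, ε - α * sig ρ x - β * x = 0 → x = R)
    (t₀ : ℝ) (r : ℝ → ℝ) (hr : Differentiable ℝ r)
    (hbound : ∀ t, t₀ ≤ t → |deriv r t + α * sig ρ (r t) + β * r t| ≤ ε)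
    (hinit : |r t₀| ≤ R) :
    ∀ t, t₀ ≤ t → |r t| ≤ R := by
  have hρ0 : 0 ≤ ρ := by linarith [hρ.1]
  have hsigR : sig ρ R = R ^ ρ := by
    simp [sig, Real.sign_of_pos hR, abs_of_pos hR]
  intro t ht
  rw [abs_le]
  rw [abs_le] at hinit
  constructor
  · -- lower bound: apply barrier lemma to u = -r - R
    have key := nonpos_of_deriv_nonpos_on_nonneg t₀ (fun t => -r t - R)
      ((hr.neg).sub_const R) (by simp; linarith [hinit.1]) ?_ t ht
    · simp at key; linarith [key]
    · intro t ht hu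
      have hderiv : deriv (fun t => -r t - R) t = -deriv r t := by
        rw [deriv_sub_const]
        exact deriv.neg
      rw [hderiv]
      have hrt : r t ≤ -R := by simp at hu; linarith
      have hb := (abs_le.1 (hbound t ht)).1
      have hsig : sig ρ (r t) ≤ -(R ^ ρ) := by
        have hrt0 : r t < 0 := lt_of_le_of_lt hrt (by linarith)
        rw [sig, Real.sign_of_neg hrt0, abs_of_neg hrt0, mul_neg_one]
        have : R ≤ -r t := by linarith
        have := Real.rpow_le_rpow hR.le this hρ0
        linarith
      nlinarith [hα.le, hβ.le]
  · -- upper bound: apply barrier lemma to u = r - R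
    have key := nonpos_of_deriv_nonpos_on_nonneg t₀ (fun t => r t - R)
      (hr.sub_const R) (by simpa using hinit.2) ?_ t ht
    · linarith [show r t - R ≤ 0 from key]
    · intro t ht hu
      have hderiv : deriv (fun t => r t - R) t = deriv r t := by
        simp [deriv_sub_const]
      rw [hderiv]
      have hrt : R ≤ r t := by simpa using hu
      have hb := (abs_le.1 (hbound t ht)).2
      have hsig : R ^ ρ ≤ sig ρ (r t) := by
        have hrt0 : 0 < r t := lt_of_lt_of_le hR hrt
        rw [sig, Real.sign_of_pos hrt0, abs_of_pos hrt0, mul_one]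
        exact Real.rpow_le_rpow hR.le hrt hρ0
      nlinarith [hα.le, hβ.le]
end

section
/- Let ρ ∈ (1,2) and for i = 1,2,3 let αᵢ > 0 and βᵢ > 0 be real constants, and set β_min := min(β₁, β₂, β₃). Suppose r : ℝ → ℝ³ is differentiable and each component satisfies the sliding-surface dynamics rᵢ'(t) = −αᵢ·sig^ρ(rᵢ(t)) − βᵢ·rᵢ(t) for all t ≥ 0. Then ‖r(t)‖₂² ≤ ‖r(0)‖₂² · exp(−2·β_min·t) for all t ≥ 0; in particular r(t) → 0 as t → ∞. -/
lemma mul_sig_nonneg (ρ x : ℝ) : 0 ≤ x * sig ρ x := by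
  unfold sig
  rcases lt_trichotomy x 0 with h | h | h
  · rw [Real.sign_of_neg h]
    have : 0 ≤ |x| ^ ρ := Real.rpow_nonneg (abs_nonneg x) ρ
    nlinarith
  · simp [h]
  · rw [Real.sign_of_pos h]
    have : 0 ≤ |x| ^ ρ := Real.rpow_nonneg (abs_nonneg x) ρ
    nlinarith

/-- Proposition 1 (asymptotic stability on the orbital sliding surface):
if each component satisfies `rᵢ' = −αᵢ·sig^ρ(rᵢ) − βᵢ·rᵢ`, then
`‖r(t)‖₂² ≤ ‖r(0)‖₂²·exp(−2β_min t)` and `r(t) → 0`. -/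
theorem sliding_surface_asymptotic_stability
    (ρ : ℝ) (hρ : ρ ∈ Set.Ioo (1 : ℝ) 2)
    (α β : Fin 3 → ℝ) (hα : ∀ i, 0 < α i) (hβ : ∀ i, 0 < β i)
    (r : ℝ → Fin 3 → ℝ) (hr : Differentiable ℝ r)
    (hdyn : ∀ i, ∀ t, 0 ≤ t →
      deriv (fun τ => r τ i) t = -α i * sig ρ (r t i) - β i * r t i) :
    (∀ t, 0 ≤ t →
      (∑ i, (r t i) ^ 2) ≤
        (∑ i, (r 0 i) ^ 2) * Real.exp (-2 * min (β 0) (min (β 1) (β 2)) * t)) ∧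
    Filter.Tendsto r Filter.atTop (nhds 0) := by
  set b : ℝ := min (β 0) (min (β 1) (β 2)) with hbdef
  have hb : 0 < b := lt_min (hβ 0) (lt_min (hβ 1) (hβ 2))
  have hble : ∀ i, b ≤ β i := by
    intro i
    fin_cases i
    · exact min_le_left _ _
    · exact (min_le_right _ _).trans (min_le_left _ _)
    · exact (min_le_right _ _).trans (min_le_right _ _)
  set V : ℝ → ℝ := fun t => ∑ i, (r t i) ^ 2 with hVdef
  have hri : ∀ i, Differentiable ℝ (fun τ => r τ i) := differentiable_pi.mp hr
  have hVd : ∀ t, HasDerivAt V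
      (∑ i, (2 : ℕ) * (r t i) ^ 1 * deriv (fun τ => r τ i) t) t := by
    intro t
    apply HasDerivAt.fun_sum
    intro i _
    exact (((hri i).differentiableAt).hasDerivAt).pow 2
  have hVdiff : Differentiable ℝ V := fun t => (hVd t).differentiableAt
  set g : ℝ → ℝ := fun t => V t * Real.exp (2 * b * t) with hgdef
  have hed : ∀ t : ℝ, HasDerivAt (fun τ => Real.exp (2 * b * τ))
      (Real.exp (2 * b * t) * (2 * b * 1)) t :=
    fun t => ((hasDerivAt_id t).const_mul (2 * b)).exp
  have hgd : ∀ t, HasDerivAt g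
      ((∑ i, (2 : ℕ) * (r t i) ^ 1 * deriv (fun τ => r τ i) t) * Real.exp (2 * b * t)
        + V t * (Real.exp (2 * b * t) * (2 * b * 1))) t :=
    fun t => (hVd t).mul (hed t)
  have hganti : AntitoneOn g (Set.Ici (0 : ℝ)) := by
    apply antitoneOn_of_deriv_nonpos (convex_Ici 0)
    · exact (hVdiff.mul (Real.differentiable_exp.comp
        ((differentiable_id.const_mul (2 * b))))).continuous.continuousOn
    · intro x _
      exact ((hgd x).differentiableAt).differentiableWithinAt
    · intro x hx
      rw [interior_Ici] at hx
      have hx0 : (0 : ℝ) ≤ x := le_of_lt hx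
      rw [(hgd x).deriv]
      have hsum : (∑ i, (2 : ℕ) * (r x i) ^ 1 * deriv (fun τ => r τ i) x) + 2 * b * V x ≤ 0 := by
        rw [hVdef]
        rw [Finset.mul_sum, ← Finset.sum_add_distrib]
        apply Finset.sum_nonpos
        intro i _
        rw [hdyn i x hx0]
        have h1 : 0 ≤ r x i * sig ρ (r x i) := mul_sig_nonneg ρ (r x i)
        have h2 : b ≤ β i := hble i
        have h3 : 0 < α i := hα i
        have h4 : 0 ≤ α i * (r x i * sig ρ (r x i)) := mul_nonneg h3.le h1
        have h5 : 0 ≤ (β i - b) * (r x i) ^ 2 :=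
          mul_nonneg (sub_nonneg.mpr h2) (sq_nonneg _)
        push_cast
        nlinarith [sq_nonneg (r x i)]
      have hexp : 0 < Real.exp (2 * b * x) := Real.exp_pos _
      nlinarith
  have hbound : ∀ t, 0 ≤ t → V t ≤ V 0 * Real.exp (-2 * b * t) := by
    intro t ht
    have h0 : g t ≤ g 0 := hganti (Set.self_mem_Ici) ht ht
    have hg0 : g 0 = V 0 := by simp [hgdef]
    have hgt : V t * Real.exp (2 * b * t) ≤ V 0 := by rw [← hg0]; exact h0
    have hexp : 0 < Real.exp (-2 * b * t) := Real.exp_pos _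
    have := mul_le_mul_of_nonneg_right hgt hexp.le
    calc V t = V t * Real.exp (2 * b * t) * Real.exp (-2 * b * t) := by
            rw [mul_assoc, ← Real.exp_add]; ring_nf; simp
      _ ≤ V 0 * Real.exp (-2 * b * t) := this
  refine ⟨hbound, ?_⟩
  have hV0 : 0 ≤ V 0 := Finset.sum_nonneg fun i _ => sq_nonneg _
  rw [tendsto_pi_nhds]
  intro i
  have hzero : (0 : Fin 3 → ℝ) i = 0 := rfl
  rw [hzero]
  apply squeeze_zero_norm' (a := fun t => Real.sqrt (V 0) * Real.exp (-b * t))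
  · filter_upwards [Filter.eventually_ge_atTop (0 : ℝ)] with t ht
    have h1 : (r t i) ^ 2 ≤ V 0 * Real.exp (-2 * b * t) := by
      refine le_trans ?_ (hbound t ht)
      exact Finset.single_le_sum (fun j _ => sq_nonneg (r t j)) (Finset.mem_univ i)
    have h2 : |r t i| ≤ Real.sqrt (V 0 * Real.exp (-2 * b * t)) := by
      rw [← Real.sqrt_sq_eq_abs]
      exact Real.sqrt_le_sqrt h1
    calc ‖r t i‖ = |r t i| := rfl
      _ ≤ Real.sqrt (V 0 * Real.exp (-2 * b * t)) := h2
      _ = Real.sqrt (V 0) * Real.exp (-b * t) := by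
          rw [Real.sqrt_mul hV0, ← Real.exp_half]
          ring_nf
  · have hbt : Filter.Tendsto (fun t : ℝ => b * t) Filter.atTop Filter.atTop :=
      Filter.Tendsto.const_mul_atTop hb Filter.tendsto_id
    have h1 : Filter.Tendsto (fun t : ℝ => Real.exp (-b * t)) Filter.atTop (nhds 0) := by
      have := Real.tendsto_exp_neg_atTop_nhds_zero.comp hbt
      simpa [Function.comp_def, neg_mul] using this
    simpa using h1.const_mul (Real.sqrt (V 0))
end

section
/- Let q_v : ℝ → ℝ³ and q₄ : ℝ → ℝ be differentiable and let ω : ℝ → ℝ³ be continuous, satisfying the quaternion error kinematics q_v'(t) = (1/2)·(q₄(t)·ω(t) + q_v(t) × ω(t)) and q₄'(t) = −(1/2)·⟨q_v(t), ω(t)⟩ for all t. Then the function V(t) := ‖q_v(t)‖₂² + (1 − q₄(t))² is differentiable with V'(t) = ⟨q_v(t), ω(t)⟩ for all t. -/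
/-- Lyapunov derivative along quaternion error kinematics:
`V = ‖q_v‖₂² + (1 − q₄)²` has derivative `V' = ⟨q_v, ω⟩`. -/
theorem quaternion_lyapunov_derivative
    (qv : ℝ → Fin 3 → ℝ) (q₄ : ℝ → ℝ) (ω : ℝ → Fin 3 → ℝ)
    (hqv : Differentiable ℝ qv) (hq₄ : Differentiable ℝ q₄) (hω : Continuous ω)
    (hkin_v : ∀ t, deriv qv t =
      (1 / 2 : ℝ) • (q₄ t • ω t + crossProduct (qv t) (ω t)))
    (hkin_4 : ∀ t, deriv q₄ t = -(1 / 2) * ∑ i, qv t i * ω t i) :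
    ∀ t, HasDerivAt (fun τ => (∑ i, (qv τ i) ^ 2) + (1 - q₄ τ) ^ 2)
      (∑ i, qv t i * ω t i) t := by
  intro t
  have hpi := hasDerivAt_pi.mp (hqv t).hasDerivAt
  have h1 : HasDerivAt (fun τ => ∑ i, (qv τ i) ^ 2)
      (∑ i, 2 * qv t i ^ 1 * deriv qv t i) t := by
    apply HasDerivAt.fun_sum
    intro i _
    simpa using (hpi i).fun_pow 2
  have h2 : HasDerivAt (fun τ => (1 - q₄ τ) ^ 2)
      (2 * (1 - q₄ t) ^ 1 * (0 - deriv q₄ t)) t := by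
    exact ((hasDerivAt_const t (1:ℝ)).sub (hq₄ t).hasDerivAt).pow 2
  have h := h1.add h2
  refine h.congr_deriv ?_
  rw [hkin_v, hkin_4]
  simp [crossProduct, Fin.sum_univ_three, Matrix.vecHead, Matrix.vecTail, Pi.smul_apply, smul_eq_mul, Function.comp]
  ring
end

section
/- Let ρ ∈ (1,2) and for i = 1,2,3 let αᵢ > 0 and βᵢ > 0 be real constants. Suppose q_v : ℝ → ℝ³ and q₄ : ℝ → ℝ are differentiable and satisfy the quaternion error kinematics q_v'(t) = (1/2)·(q₄(t)·ω(t) + q_v(t) × ω(t)) and q₄'(t) = −(1/2)·⟨q_v(t), ω(t)⟩, where the angular velocity error lies on the sliding surface: ωᵢ(t) = −αᵢ·sig^ρ(q_{v,i}(t)) − βᵢ·q_{v,i}(t) for i = 1,2,3. Assume the unit-quaternion constraint ‖q_v(t)‖₂² + q₄(t)² = 1 holds for all t ≥ 0 and that q₄(0) ≥ 0. Then q_v(t) → 0 as t → ∞. -/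
/-- Proposition 2 (asymptotic stability on the attitude sliding surface):
under the quaternion error kinematics with the angular velocity error on
the sliding surface `ωᵢ = −αᵢ·sig^ρ(q_{v,i}) − βᵢ·q_{v,i}`, the unit
constraint and `q₄(0) ≥ 0`, the quaternion error vector tends to zero. -/
theorem attitude_sliding_asymptotic_stability
    (ρ : ℝ) (hρ : ρ ∈ Set.Ioo (1 : ℝ) 2)
    (α β : Fin 3 → ℝ) (hα : ∀ i, 0 < α i) (hβ : ∀ i, 0 < β i)
    (qv : ℝ → Fin 3 → ℝ) (q₄ : ℝ → ℝ) (ω : ℝ → Fin 3 → ℝ)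
    (hqv : Differentiable ℝ qv) (hq₄ : Differentiable ℝ q₄)
    (hω : ∀ t i, ω t i = -α i * sig ρ (qv t i) - β i * qv t i)
    (hkin_v : ∀ t, deriv qv t =
      (1 / 2 : ℝ) • (q₄ t • ω t + crossProduct (qv t) (ω t)))
    (hkin_4 : ∀ t, deriv q₄ t = -(1 / 2) * ∑ i, qv t i * ω t i)
    (hunit : ∀ t, 0 ≤ t → (∑ i, (qv t i) ^ 2) + (q₄ t) ^ 2 = 1)
    (h40 : 0 ≤ q₄ 0) :
    Filter.Tendsto qv Filter.atTop (nhds 0) := by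
  -- minimum of the β's
  set b : ℝ := min (β 0) (min (β 1) (β 2)) with hb
  have hbpos : 0 < b := lt_min (hβ 0) (lt_min (hβ 1) (hβ 2))
  have hble : ∀ i, b ≤ β i := by
    intro i; fin_cases i
    · exact min_le_left _ _
    · exact le_trans (min_le_right _ _) (min_le_left _ _)
    · exact le_trans (min_le_right _ _) (min_le_right _ _)
  -- rewrite the derivative of q₄ as an explicitly nonnegative sum
  have hd4 : ∀ t, deriv q₄ t =
      (1 / 2) * ∑ i, (α i * (qv t i * sig ρ (qv t i)) + β i * (qv t i) ^ 2) := by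
    intro t
    rw [hkin_4 t, show (∑ i, qv t i * ω t i)
        = -∑ i, (α i * (qv t i * sig ρ (qv t i)) + β i * (qv t i) ^ 2) by
      rw [← Finset.sum_neg_distrib]
      refine Finset.sum_congr rfl fun i _ => ?_
      rw [hω t i]; ring]
    ring
  -- the derivative of q₄ is nonnegative, so q₄ is monotone
  have hterm : ∀ t i, 0 ≤ α i * (qv t i * sig ρ (qv t i)) + β i * (qv t i) ^ 2 := by
    intro t i
    have h1 := mul_sig_nonneg ρ (qv t i)
    have h2 := sq_nonneg (qv t i)
    nlinarith [(hα i).le, (hβ i).le]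
  have hd4nonneg : ∀ t, 0 ≤ deriv q₄ t := by
    intro t; rw [hd4 t]
    have : 0 ≤ ∑ i, (α i * (qv t i * sig ρ (qv t i)) + β i * (qv t i) ^ 2) :=
      Finset.sum_nonneg fun i _ => hterm t i
    linarith
  have hmono : Monotone q₄ := monotone_of_deriv_nonneg hq₄ hd4nonneg
  -- lower bound on the derivative
  have hd4ge : ∀ t, (b / 2) * ∑ i, (qv t i) ^ 2 ≤ deriv q₄ t := by
    intro t; rw [hd4 t]
    have h1 : ∑ i, b * (qv t i) ^ 2
        ≤ ∑ i, (α i * (qv t i * sig ρ (qv t i)) + β i * (qv t i) ^ 2) := by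
      refine Finset.sum_le_sum fun i _ => ?_
      have := mul_sig_nonneg ρ (qv t i)
      nlinarith [(hα i).le, hble i, sq_nonneg (qv t i)]
    rw [← Finset.mul_sum] at h1
    linarith
  -- q₄ is bounded above by 1
  have hq41 : ∀ t, q₄ t ≤ 1 := by
    have h01 : q₄ 0 ≤ 1 := by
      have := hunit 0 le_rfl
      have hs : (0:ℝ) ≤ ∑ i, (qv 0 i) ^ 2 := Finset.sum_nonneg fun i _ => sq_nonneg _
      nlinarith
    intro t
    rcases le_total t 0 with h | h
    · exact le_trans (hmono h) h01
    · have hpos : 0 ≤ q₄ t := le_trans h40 (hmono h)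
      have := hunit t h
      have hs : (0:ℝ) ≤ ∑ i, (qv t i) ^ 2 := Finset.sum_nonneg fun i _ => sq_nonneg _
      nlinarith
  have hbdd : BddAbove (Set.range q₄) := ⟨1, by rintro x ⟨t, rfl⟩; exact hq41 t⟩
  set L : ℝ := ⨆ t, q₄ t with hL
  have htend : Filter.Tendsto q₄ Filter.atTop (nhds L) := tendsto_atTop_ciSup hmono hbdd
  have hLle : ∀ t, q₄ t ≤ L := fun t => le_ciSup hbdd t
  have hL1 : L ≤ 1 := ciSup_le hq41
  have hL0 : 0 ≤ L := le_trans h40 (hLle 0)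
  -- L = 1
  have hLeq : L = 1 := by
    by_contra hne
    have hLlt : L < 1 := lt_of_le_of_ne hL1 hne
    set c : ℝ := (b / 2) * (1 - L ^ 2) with hc
    have hcpos : 0 < c := by
      have h : L ^ 2 < 1 := by nlinarith
      have : (0:ℝ) < b / 2 := by positivity
      nlinarith
    -- on [0,∞), deriv q₄ ≥ c
    have hge : ∀ t, 0 ≤ t → c ≤ deriv q₄ t := by
      intro t ht
      have h1 : ∑ i, (qv t i) ^ 2 = 1 - (q₄ t) ^ 2 := by
        have := hunit t ht; linarith
      have h2 : (q₄ t) ^ 2 ≤ L ^ 2 := by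
        have hpos : 0 ≤ q₄ t := le_trans h40 (hmono ht)
        nlinarith [hLle t]
      have := hd4ge t
      rw [h1] at this
      calc c ≤ (b / 2) * (1 - (q₄ t) ^ 2) := by
              rw [hc]; apply mul_le_mul_of_nonneg_left (by linarith) (by positivity)
        _ ≤ deriv q₄ t := this
    -- so q₄ t ≥ q₄ 0 + c t on [0,∞) : consider g t = q₄ t - c t
    have hgm : MonotoneOn (fun t => q₄ t - c * t) (Set.Ici (0:ℝ)) := by
      apply monotoneOn_of_deriv_nonneg (convex_Ici 0)
      · exact (hq₄.sub (differentiable_id.const_mul c)).continuous.continuousOn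
      · exact (hq₄.sub (differentiable_id.const_mul c)).differentiableOn
      · intro x hx
        rw [interior_Ici] at hx
        have hdg : deriv (fun t => q₄ t - c * t) x = deriv q₄ x - c := by
          have := ((hq₄ x).hasDerivAt.sub (((hasDerivAt_id x).const_mul c))).deriv
          simpa [Pi.sub_def] using this
        rw [hdg]
        have := hge x (le_of_lt hx)
        linarith
    have hbig : ∀ t, 0 ≤ t → c * t ≤ q₄ t := by
      intro t ht
      have := hgm (Set.mem_Ici.mpr le_rfl) (Set.mem_Ici.mpr ht) ht
      simp only [mul_zero, sub_zero] at this
      linarith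
    have := hbig (2 / c) (by positivity)
    rw [mul_div_cancel₀ _ (ne_of_gt hcpos)] at this
    have := hq41 (2 / c)
    linarith
  rw [hLeq] at htend
  -- hence the sum of squares tends to 0
  have hsum : Filter.Tendsto (fun t => ∑ i, (qv t i) ^ 2) Filter.atTop (nhds 0) := by
    have h1 : Filter.Tendsto (fun t => 1 - (q₄ t) ^ 2) Filter.atTop (nhds 0) := by
      have := ((htend.pow 2).const_sub 1)
      simpa using this
    refine h1.congr' ?_
    filter_upwards [Filter.eventually_ge_atTop (0:ℝ)] with t ht
    have := hunit t ht; linarith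
  -- each coordinate tends to 0
  rw [show (0 : Fin 3 → ℝ) = fun _ => (0:ℝ) from rfl, tendsto_pi_nhds]
  intro i
  have hsq : Filter.Tendsto (fun t => (qv t i) ^ 2) Filter.atTop (nhds 0) := by
    apply squeeze_zero (fun t => sq_nonneg _) (fun t => ?_) hsum
    exact Finset.single_le_sum (fun j _ => sq_nonneg (qv t j)) (Finset.mem_univ i)
  have habs : Filter.Tendsto (fun t => |qv t i|) Filter.atTop (nhds 0) := by
    have h2 := (Real.continuous_sqrt.tendsto 0).comp hsq
    simp only [Function.comp_def, Real.sqrt_zero] at h2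
    have h3 : (fun t => Real.sqrt ((qv t i) ^ 2)) = fun t => |qv t i| :=
      funext fun t => Real.sqrt_sq_eq_abs _
    rwa [h3] at h2
  have hneg : Filter.Tendsto (fun t => -|qv t i|) Filter.atTop (nhds 0) := by
    simpa using habs.neg
  exact tendsto_of_tendsto_of_tendsto_of_le_of_le hneg habs
    (fun t => neg_abs_le _) (fun t => le_abs_self _)
end
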